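/- Run Round-Robin (Mechanism 1) on the truthful profile (v_1, …, v_n) of normalized, monotone valuations, renumbering the goods so that g_k is the good allocated at stage k; for i ∈ {0, …, m}, let G_i = {g_{i+1}, …, g_m} be the remaining goods at the end of stage i and B_i the set of goods agent 1 has received by the end of stage i. Run Mechanism 1 again on the profile where agent 1 misreports an arbitrary normalized monotone valuation v_1' (the others unchanged); let g_k' be the good allocated at stage k of this run, and define G_i' = {g_{i+1}', …, g_m'} and B_i' analogously. Let X_i = B_i' ∪ (G_i' \ G_i). Then for every i ∈ {0, …, m} there exists a mapping M_i : X_i → B_i such that (1) v_1({g}) ≤ v_1({M_i(g)}) for every g ∈ X_i, and (2) |M_i^{-1}(b)| ≤ 2 for every b ∈ B_i. -/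

import Mathlib

/-- A valuation: normalized and monotone set function on goods. -/
def IsValuation {m : ℕ} (v : Finset (Fin m) → ℝ) : Prop :=
  v ∅ = 0 ∧ ∀ S T : Finset (Fin m), S ⊆ T → v S ≤ v T

def AdditiveVal {m : ℕ} (v : Finset (Fin m) → ℝ) : Prop :=
  ∀ S T : Finset (Fin m), Disjoint S T → v (S ∪ T) = v S + v T

def SubadditiveVal {m : ℕ} (v : Finset (Fin m) → ℝ) : Prop :=
  ∀ S T : Finset (Fin m), v (S ∪ T) ≤ v S + v T

def CancelableVal {m : ℕ} (v : Finset (Fin m) → ℝ) : Prop :=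
  ∀ S T : Finset (Fin m), ∀ g : Fin m, g ∉ S ∪ T → v (insert g S) > v (insert g T) → v S > v T

def SubmodularVal {m : ℕ} (v : Finset (Fin m) → ℝ) : Prop :=
  ∀ S T : Finset (Fin m), S ⊆ T → ∀ g : Fin m, g ∉ T →
    v (insert g T) - v T ≤ v (insert g S) - v S

def MultiplicativeVal {m : ℕ} (v : Finset (Fin m) → ℝ) : Prop :=
  (∀ g : Fin m, 1 ≤ v {g}) ∧ ∀ S : Finset (Fin m), S.Nonempty → v S = ∏ g ∈ S, v {g}

def XOSVal {m : ℕ} (v : Finset (Fin m) → ℝ) : Prop :=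
  ∃ (k : ℕ) (f : Fin (k + 1) → Finset (Fin m) → ℝ),
    (∀ j, AdditiveVal (f j)) ∧
    ∀ S : Finset (Fin m), (∃ j, v S = f j S) ∧ ∀ j, f j S ≤ v S

def IsAllocation {n m : ℕ} (A : Fin n → Finset (Fin m)) : Prop :=
  (∀ i j : Fin n, i ≠ j → Disjoint (A i) (A j)) ∧ ∀ g : Fin m, ∃ i, g ∈ A i

/-- `α`-EF1. -/
def EF1 {n m : ℕ} (α : ℝ) (v : Fin n → Finset (Fin m) → ℝ) (A : Fin n → Finset (Fin m)) : Prop :=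
  ∀ i j : Fin n, A j = ∅ ∨ ∃ g ∈ A j, α * v i (A j \ {g}) ≤ v i (A i)

/-- The remaining good maximizing `f`, ties broken in favor of the smallest index. -/
noncomputable def chooseFavorite {m : ℕ} (f : Fin m → ℝ) (S : Finset (Fin m))
    (h : S.Nonempty) : Fin m :=
  (S.filter fun g => ∀ h' ∈ S, f h' ≤ f g).min' (by
    obtain ⟨b, hb, hmax⟩ := S.exists_max_image f h
    exact ⟨b, Finset.mem_filter.mpr ⟨hb, hmax⟩⟩)

/-- The state (bundles, remaining goods) of round-robin after `k` stages, where at stage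
`k+1` the agent `k % n` picks a remaining good maximizing `score i (current bundle of i)`,
ties broken towards the smallest index. -/
noncomputable def rrState {n m : ℕ} (score : Fin n → Finset (Fin m) → Fin m → ℝ) :
    ℕ → (Fin n → Finset (Fin m)) × Finset (Fin m)
  | 0 => (fun _ => (∅ : Finset (Fin m)), Finset.univ)
  | k + 1 =>
      let st := rrState score k
      if hn : 0 < n then
        if h : st.2.Nonempty then
          let i : Fin n := ⟨k % n, Nat.mod_lt k hn⟩
          let g := chooseFavorite (score i (st.1 i)) st.2 h
          (Function.update st.1 i (insert g (st.1 i)), st.2.erase g)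
        else st
      else st

/-- Mechanism 1: Round-Robin where each agent picks a remaining good of largest value. -/
noncomputable def roundRobin1 {n m : ℕ} (v : Fin n → Finset (Fin m) → ℝ) :
    Fin n → Finset (Fin m) :=
  (rrState (fun i _ g => v i {g}) m).1

/-- Mechanism 2: Round-Robin where each agent picks a remaining good of largest
marginal value with respect to his current bundle. -/
noncomputable def roundRobin2 {n m : ℕ} (v : Fin n → Finset (Fin m) → ℝ) :
    Fin n → Finset (Fin m) :=
  (rrState (fun i A g => v i (insert g A) - v i A) m).1

noncomputable def expTransform {m : ℕ} (δ : ℝ) (v : Finset (Fin m) → ℝ) :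
    Finset (Fin m) → ℝ :=
  fun S => if S = ∅ then 0 else Real.exp (δ * v S)

def addVal {m : ℕ} (w : Fin m → ℝ) : Finset (Fin m) → ℝ := fun S => ∑ g ∈ S, w g

def Envies {n m : ℕ} (v : Fin n → Finset (Fin m) → ℝ) (A : Fin n → Finset (Fin m))
    (i j : Fin n) : Prop :=
  v i (A i) < v i (A j)

def Unenvied {n m : ℕ} (v : Fin n → Finset (Fin m) → ℝ) (A : Fin n → Finset (Fin m))
    (j : Fin n) : Prop :=
  ∀ i : Fin n, ¬ Envies v A i j

def EnvyCycleStep {n m : ℕ} (v : Fin n → Finset (Fin m) → ℝ)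
    (A A' : Fin n → Finset (Fin m)) : Prop :=
  ∃ σ : Equiv.Perm (Fin n), σ.IsCycle ∧ (∀ i, σ i ≠ i → Envies v A i (σ i)) ∧
    ∀ i, A' i = A (σ i)

def HasEnvyCycle {n m : ℕ} (v : Fin n → Finset (Fin m) → ℝ)
    (A : Fin n → Finset (Fin m)) : Prop :=
  ∃ σ : Equiv.Perm (Fin n), σ.IsCycle ∧ ∀ i, σ i ≠ i → Envies v A i (σ i)

def Eliminated {n m : ℕ} (v : Fin n → Finset (Fin m) → ℝ)
    (A B : Fin n → Finset (Fin m)) : Prop :=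
  Relation.ReflTransGen (EnvyCycleStep v) A B ∧ ¬ HasEnvyCycle v B

inductive EGP {n m : ℕ} (v : Fin n → Finset (Fin m) → ℝ) :
    ℕ → (Fin n → Finset (Fin m)) → Prop
  | init : EGP v 0 (fun _ => ∅)
  | step {k : ℕ} (hk : k < m) {A C : Fin n → Finset (Fin m)} (j : Fin n) :
      EGP v k A → Unenvied v A j → (∀ j' : Fin n, Unenvied v A j' → j ≤ j') →
      Eliminated v (Function.update A j (insert ⟨k, hk⟩ (A j))) C →
      EGP v (k + 1) C

inductive EGP2 {n m : ℕ} (v : Fin n → Finset (Fin m) → ℝ) :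
    ℕ → (Fin n → Finset (Fin m)) → Finset (Fin m) → Prop
  | init : EGP2 v 0 (fun _ => ∅) Finset.univ
  | step {k : ℕ} {A C : Fin n → Finset (Fin m)} {S : Finset (Fin m)} (j : Fin n) (g : Fin m) :
      EGP2 v k A S → Unenvied v A j → (∀ j' : Fin n, Unenvied v A j' → j ≤ j') →
      g ∈ S → (∀ h ∈ S, v j {h} ≤ v j {g}) → (∀ h ∈ S, v j {g} ≤ v j {h} → g ≤ h) →
      Eliminated v (Function.update A j (insert g (A j))) C →
      EGP2 v (k + 1) C (S.erase g)

section helpers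
variable {n m : ℕ}

lemma chooseFavorite_spec (f : Fin m → ℝ) (S : Finset (Fin m)) (h : S.Nonempty) :
    chooseFavorite f S h ∈ S.filter fun g => ∀ h' ∈ S, f h' ≤ f g :=
  Finset.min'_mem _ _

lemma chooseFavorite_mem (f : Fin m → ℝ) (S : Finset (Fin m)) (h : S.Nonempty) :
    chooseFavorite f S h ∈ S := (Finset.mem_filter.mp (chooseFavorite_spec f S h)).1

lemma chooseFavorite_le (f : Fin m → ℝ) (S : Finset (Fin m)) (h : S.Nonempty) :
    ∀ x ∈ S, f x ≤ f (chooseFavorite f S h) :=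
  (Finset.mem_filter.mp (chooseFavorite_spec f S h)).2

lemma chooseFavorite_min (f : Fin m → ℝ) (S : Finset (Fin m)) (h : S.Nonempty) :
    ∀ x ∈ S, f (chooseFavorite f S h) ≤ f x → chooseFavorite f S h ≤ x := by
  intro x hx hle
  refine Finset.min'_le _ _ (Finset.mem_filter.mpr ⟨hx, fun y hy => ?_⟩)
  exact le_trans (chooseFavorite_le f S h y hy) hle

variable (score : Fin n → Finset (Fin m) → Fin m → ℝ)

lemma rrState_succ (hn : 0 < n) (k : ℕ) (h : (rrState score k).2.Nonempty) :
    rrState score (k + 1) =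
      (Function.update (rrState score k).1 ⟨k % n, Nat.mod_lt k hn⟩
        (insert (chooseFavorite (score ⟨k % n, Nat.mod_lt k hn⟩
            ((rrState score k).1 ⟨k % n, Nat.mod_lt k hn⟩)) (rrState score k).2 h)
          ((rrState score k).1 ⟨k % n, Nat.mod_lt k hn⟩)),
       (rrState score k).2.erase (chooseFavorite (score ⟨k % n, Nat.mod_lt k hn⟩
            ((rrState score k).1 ⟨k % n, Nat.mod_lt k hn⟩)) (rrState score k).2 h)) := by
  conv_lhs => rw [rrState]
  simp [hn, h]

lemma rrState_card (hn : 0 < n) : ∀ k, k ≤ m → (rrState score k).2.card = m - k := by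
  intro k
  induction k with
  | zero => simp [rrState]
  | succ k ih =>
      intro hk
      have hk' : k ≤ m := Nat.le_of_succ_le hk
      have hne : (rrState score k).2.Nonempty := by
        rw [← Finset.card_pos, ih hk']
        omega
      rw [rrState_succ score hn k hne, Finset.card_erase_of_mem (chooseFavorite_mem _ _ _),
        ih hk']
      omega

lemma rrState_succ_stuck (k : ℕ) (h : ¬(0 < n) ∨ ¬(rrState score k).2.Nonempty) :
    rrState score (k + 1) = rrState score k := by
  rw [rrState]
  rcases h with h | h <;> simp [h]

lemma rrState_snd_subset (k : ℕ) : (rrState score (k + 1)).2 ⊆ (rrState score k).2 := by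
  by_cases hn : 0 < n
  · by_cases hne : (rrState score k).2.Nonempty
    · rw [rrState_succ score hn k hne]
      exact Finset.erase_subset _ _
    · rw [rrState_succ_stuck score k (Or.inr hne)]
  · rw [rrState_succ_stuck score k (Or.inl hn)]

lemma rrState_snd_subset_le {k l : ℕ} (hkl : k ≤ l) :
    (rrState score l).2 ⊆ (rrState score k).2 := by
  induction l with
  | zero => simpa [Nat.le_zero.mp hkl] using le_refl _
  | succ l ih =>
      rcases Nat.lt_or_ge k (l + 1) with h | h
      · exact (rrState_snd_subset score l).trans (ih (Nat.lt_succ_iff.mp h))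
      · have : k = l + 1 := le_antisymm hkl h
        subst this; exact Finset.Subset.refl _

lemma rrState_fst_subset (j : Fin n) (k : ℕ) :
    (rrState score k).1 j ⊆ (rrState score (k + 1)).1 j := by
  by_cases hn : 0 < n
  · by_cases hne : (rrState score k).2.Nonempty
    · rw [rrState_succ score hn k hne]
      dsimp only
      rcases eq_or_ne j ⟨k % n, Nat.mod_lt k hn⟩ with rfl | hne'
      · rw [Function.update_self]; exact Finset.subset_insert _ _
      · rw [Function.update_of_ne hne']
    · rw [rrState_succ_stuck score k (Or.inr hne)]
  · rw [rrState_succ_stuck score k (Or.inl hn)]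

lemma rrState_fst_subset_le (j : Fin n) {k l : ℕ} (hkl : k ≤ l) :
    (rrState score k).1 j ⊆ (rrState score l).1 j := by
  induction l with
  | zero => simpa [Nat.le_zero.mp hkl] using le_refl _
  | succ l ih =>
      rcases Nat.lt_or_ge k (l + 1) with h | h
      · exact (ih (Nat.lt_succ_iff.mp h)).trans (rrState_fst_subset score j l)
      · have : k = l + 1 := le_antisymm hkl h
        subst this; exact Finset.Subset.refl _

lemma rrState_disjoint (k : ℕ) (j : Fin n) :
    ∀ g ∈ (rrState score k).1 j, g ∉ (rrState score k).2 := by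
  induction k with
  | zero => simp [rrState]
  | succ k ih =>
      intro g hg
      by_cases hn : 0 < n
      · by_cases hne : (rrState score k).2.Nonempty
        · rw [rrState_succ score hn k hne] at hg ⊢
          dsimp only at hg ⊢
          set i : Fin n := ⟨k % n, Nat.mod_lt k hn⟩
          set c := chooseFavorite (score i ((rrState score k).1 i)) (rrState score k).2 hne
            with hc
          intro hmem
          have hmem' : g ∈ (rrState score k).2 := Finset.mem_of_mem_erase hmem
          have hgne : g ≠ c := Finset.ne_of_mem_erase hmem
          rcases eq_or_ne j i with rfl | hj
          · rw [Function.update_self] at hg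
            rcases Finset.mem_insert.mp hg with rfl | hg'
            · exact hgne rfl
            · exact ih g hg' hmem'
          · rw [Function.update_of_ne hj] at hg
            exact ih g hg hmem'
        · rw [rrState_succ_stuck score k (Or.inr hne)] at hg ⊢
          exact ih g hg
      · rw [rrState_succ_stuck score k (Or.inl hn)] at hg ⊢
        exact ih g hg

end helpers

lemma pick_mem_bundle {n m : ℕ} (hn : 0 < n) (v : Fin n → Finset (Fin m) → ℝ)
    {k i : ℕ} (hk : k % n = 0) (hki : k < i)
    (hne : (rrState (fun j (_ : Finset (Fin m)) g => v j {g}) k).2.Nonempty) :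
    chooseFavorite (fun h => v ⟨0, hn⟩ {h})
        (rrState (fun j (_ : Finset (Fin m)) g => v j {g}) k).2 hne
      ∈ (rrState (fun j (_ : Finset (Fin m)) g => v j {g}) i).1 ⟨0, hn⟩ := by
  refine rrState_fst_subset_le _ ⟨0, hn⟩ hki ?_
  rw [rrState_succ _ hn k hne]
  dsimp only
  have e : (⟨k % n, Nat.mod_lt k hn⟩ : Fin n) = ⟨0, hn⟩ := Fin.ext (by simp [hk])
  rw [e, Function.update_self]
  exact Finset.mem_insert_self _ _

lemma rr_map_invariant {n m : ℕ} (hn : 0 < n) (v : Fin n → Finset (Fin m) → ℝ)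
    (v1' : Finset (Fin m) → ℝ) :
    ∀ i : ℕ, i ≤ m →
      ∃ f : Fin m → Fin m,
        (∀ g ∈ (rrState (fun j (_ : Finset (Fin m)) g =>
              Function.update v ⟨0, hn⟩ v1' j {g}) i).1 ⟨0, hn⟩ ∪
            ((rrState (fun j (_ : Finset (Fin m)) g =>
              Function.update v ⟨0, hn⟩ v1' j {g}) i).2 \
              (rrState (fun j (_ : Finset (Fin m)) g => v j {g}) i).2),
          ∃ k, k < i ∧ k % n = 0 ∧
            g ∈ (rrState (fun j (_ : Finset (Fin m)) g => v j {g}) k).2 ∧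
            ∃ hne : (rrState (fun j (_ : Finset (Fin m)) g => v j {g}) k).2.Nonempty,
              f g = chooseFavorite (fun h => v ⟨0, hn⟩ {h})
                (rrState (fun j (_ : Finset (Fin m)) g => v j {g}) k).2 hne) ∧
        (∀ b : Fin m,
          (((rrState (fun j (_ : Finset (Fin m)) g =>
              Function.update v ⟨0, hn⟩ v1' j {g}) i).1 ⟨0, hn⟩ ∪
            ((rrState (fun j (_ : Finset (Fin m)) g =>
              Function.update v ⟨0, hn⟩ v1' j {g}) i).2 \
              (rrState (fun j (_ : Finset (Fin m)) g => v j {g}) i).2)).filter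
            fun g => f g = b).card ≤ 2) := by
  classical
  intro i
  induction i with
  | zero =>
      intro _
      refine ⟨id, ?_, ?_⟩ <;> simp [rrState]
  | succ i ih =>
      intro him
      have him' : i ≤ m := Nat.le_of_succ_le him
      obtain ⟨f, hker, hcard⟩ := ih him'
      set a1 : Fin n := ⟨0, hn⟩ with ha1
      set w : Fin n → Finset (Fin m) → ℝ := Function.update v a1 v1' with hw
      set sV : Fin n → Finset (Fin m) → Fin m → ℝ := fun j _ g => v j {g} with hsV
      set sW : Fin n → Finset (Fin m) → Fin m → ℝ := fun j _ g => w j {g} with hsW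
      set T := rrState sV i with hT
      set M := rrState sW i with hM
      have hTne : T.2.Nonempty := by
        rw [← Finset.card_pos, hT, rrState_card sV hn i him']; omega
      have hMne : M.2.Nonempty := by
        rw [← Finset.card_pos, hM, rrState_card sW hn i him']; omega
      set X := M.1 a1 ∪ (M.2 \ T.2) with hX
      have hfB : ∀ x ∈ X, f x ∈ T.1 a1 := by
        intro x hx
        obtain ⟨k, hki, hk0, hxk, hne, hfx⟩ := hker x hx
        rw [hfx, hT]
        exact pick_mem_bundle hn v hk0 hki hne
      have hTdisj : ∀ x ∈ T.1 a1, x ∉ T.2 := fun x hx => rrState_disjoint sV i a1 x hx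
      have hMdisj : ∀ x ∈ M.1 a1, x ∉ M.2 := fun x hx => rrState_disjoint sW i a1 x hx
      have hTsucc := rrState_succ sV hn i hTne
      have hMsucc := rrState_succ sW hn i hMne
      by_cases hA : i % n = 0
      · -- agent 1's turn
        have e : (⟨i % n, Nat.mod_lt i hn⟩ : Fin n) = a1 := Fin.ext (by simp [hA, ha1])
        rw [e] at hTsucc hMsucc
        set g := chooseFavorite (sV a1 (T.1 a1)) T.2 hTne with hg
        set g' := chooseFavorite (sW a1 (M.1 a1)) M.2 hMne with hg'
        have hgT : g ∈ T.2 := chooseFavorite_mem _ _ _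
        have hg'M : g' ∈ M.2 := chooseFavorite_mem _ _ _
        have hBsucc : (rrState sW (i + 1)).1 a1 = insert g' (M.1 a1) := by
          rw [hMsucc]; dsimp only; rw [Function.update_self]
        have hGWsucc : (rrState sW (i + 1)).2 = M.2.erase g' := by rw [hMsucc]
        have hGVsucc : (rrState sV (i + 1)).2 = T.2.erase g := by rw [hTsucc]
        have hold : ∀ x, x ∈ (rrState sW (i + 1)).1 a1 ∪
              ((rrState sW (i + 1)).2 \ (rrState sV (i + 1)).2) →
            ¬(x = g ∨ (x = g' ∧ g' ∈ T.2)) → x ∈ X := by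
          intro x hx hc
          rw [hBsucc, hGWsucc, hGVsucc] at hx
          rcases Finset.mem_union.mp hx with hx1 | hx2
          · rcases Finset.mem_insert.mp hx1 with rfl | hx1'
            · have hg'nT : g' ∉ T.2 := fun hmem => hc (Or.inr ⟨rfl, hmem⟩)
              exact Finset.mem_union_right _ (Finset.mem_sdiff.mpr ⟨hg'M, hg'nT⟩)
            · exact Finset.mem_union_left _ hx1'
          · obtain ⟨hxM, hxT⟩ := Finset.mem_sdiff.mp hx2
            have hxne : x ≠ g := fun h => hc (Or.inl h)
            have hxM2 : x ∈ M.2 := Finset.mem_of_mem_erase hxM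
            have hxnT : x ∉ T.2 := fun h => hxT (Finset.mem_erase.mpr ⟨hxne, h⟩)
            exact Finset.mem_union_right _ (Finset.mem_sdiff.mpr ⟨hxM2, hxnT⟩)
        refine ⟨fun x => if x = g ∨ (x = g' ∧ g' ∈ T.2) then g else f x, ?_, ?_⟩
        · intro x hx
          by_cases hc : x = g ∨ (x = g' ∧ g' ∈ T.2)
          · refine ⟨i, Nat.lt_succ_self i, hA, ?_, hTne, ?_⟩
            · rcases hc with rfl | ⟨rfl, h2⟩
              · exact hgT
              · exact h2
            · simp only [if_pos hc]; rfl
          · obtain ⟨k, hki, hk0, hxk, hne, hfx⟩ := hker x (hold x hx hc)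
            refine ⟨k, Nat.lt_succ_of_lt hki, hk0, hxk, hne, ?_⟩
            simp only [if_neg hc]
            exact hfx
        · intro b
          by_cases hb : b = g
          · subst hb
            refine le_trans (Finset.card_le_card (?_ : _ ⊆ (insert g {g'} : Finset (Fin m)))) ?_
            · intro x hx
              obtain ⟨hx1, hx2⟩ := Finset.mem_filter.mp hx
              by_cases hc : x = g ∨ (x = g' ∧ g' ∈ T.2)
              · rcases hc with rfl | ⟨rfl, _⟩
                · exact Finset.mem_insert_self _ _
                · exact Finset.mem_insert_of_mem (Finset.mem_singleton_self _)
              · exfalso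
                simp only [if_neg hc] at hx2
                have hmem := hfB x (hold x hx1 hc)
                rw [hx2] at hmem
                exact hTdisj g hmem hgT
            · exact le_trans (Finset.card_insert_le _ _) (by simp)
          · refine le_trans (Finset.card_le_card ?_) (hcard b)
            intro x hx
            obtain ⟨hx1, hx2⟩ := Finset.mem_filter.mp hx
            have hc : ¬(x = g ∨ (x = g' ∧ g' ∈ T.2)) := by
              intro hc
              simp only [if_pos hc] at hx2
              exact hb hx2.symm
            simp only [if_neg hc] at hx2
            exact Finset.mem_filter.mpr ⟨hold x hx1 hc, hx2⟩
      · -- another agent's turn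
        have e : (⟨i % n, Nat.mod_lt i hn⟩ : Fin n) ≠ a1 := by
          intro h
          exact hA (by simpa [ha1] using congrArg Fin.val h)
        set idx : Fin n := ⟨i % n, Nat.mod_lt i hn⟩ with hidx
        set g := chooseFavorite (sV idx (T.1 idx)) T.2 hTne with hg
        set g' := chooseFavorite (sW idx (M.1 idx)) M.2 hMne with hg'
        have hgT : g ∈ T.2 := chooseFavorite_mem _ _ _
        have hg'M : g' ∈ M.2 := chooseFavorite_mem _ _ _
        have hsame : sW idx (M.1 idx) = sV idx (T.1 idx) := by
          funext h
          show w idx {h} = v idx {h}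
          rw [hw, Function.update_of_ne e]
        have hg'eq : g' = chooseFavorite (sV idx (T.1 idx)) M.2 hMne := by
          rw [hg', hsame]
        have hBsucc : (rrState sW (i + 1)).1 a1 = M.1 a1 := by
          rw [hMsucc]; dsimp only; rw [Function.update_of_ne (Ne.symm e)]
        have hGWsucc : (rrState sW (i + 1)).2 = M.2.erase g' := by rw [hMsucc]
        have hGVsucc : (rrState sV (i + 1)).2 = T.2.erase g := by rw [hTsucc]
        have hold : ∀ x, x ∈ (rrState sW (i + 1)).1 a1 ∪
              ((rrState sW (i + 1)).2 \ (rrState sV (i + 1)).2) →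
            x ≠ g → x ∈ X := by
          intro x hx hxg
          rw [hBsucc, hGWsucc, hGVsucc] at hx
          rcases Finset.mem_union.mp hx with hx1 | hx2
          · exact Finset.mem_union_left _ hx1
          · obtain ⟨hxM, hxT⟩ := Finset.mem_sdiff.mp hx2
            have hxM2 : x ∈ M.2 := Finset.mem_of_mem_erase hxM
            have hxnT : x ∉ T.2 := fun h => hxT (Finset.mem_erase.mpr ⟨hxg, h⟩)
            exact Finset.mem_union_right _ (Finset.mem_sdiff.mpr ⟨hxM2, hxnT⟩)
        by_cases hnew : g ∈ M.2 ∧ g ≠ g'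
        · obtain ⟨hgM2, hgg'⟩ := hnew
          -- tie-breaking: g' must already be gone from the truthful pool
          have hg'nT : g' ∉ T.2 := by
            intro hg'T
            have h1 : sV idx (T.1 idx) g' ≤ sV idx (T.1 idx) g :=
              chooseFavorite_le _ T.2 hTne g' hg'T
            have h2 : sV idx (T.1 idx) g ≤ sV idx (T.1 idx) g' := by
              have := chooseFavorite_le (sV idx (T.1 idx)) M.2 hMne g hgM2
              rwa [← hg'eq] at this
            have h3 : g ≤ g' := by
              have h2' : sV idx (T.1 idx) (chooseFavorite (sV idx (T.1 idx)) T.2 hTne)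
                  ≤ sV idx (T.1 idx) g' := by rw [← hg]; exact h2
              have := chooseFavorite_min (sV idx (T.1 idx)) T.2 hTne g' hg'T h2'
              rwa [← hg] at this
            have h4 : g' ≤ g := by
              have h1' : sV idx (T.1 idx) (chooseFavorite (sV idx (T.1 idx)) M.2 hMne)
                  ≤ sV idx (T.1 idx) g := by rw [← hg'eq]; exact h1
              have := chooseFavorite_min (sV idx (T.1 idx)) M.2 hMne g hgM2 h1'
              rwa [← hg'eq] at this
            exact hgg' (le_antisymm h3 h4)
          have hg'X : g' ∈ X :=
            Finset.mem_union_right _ (Finset.mem_sdiff.mpr ⟨hg'M, hg'nT⟩)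
          obtain ⟨k0, hk0i, hk00, hg'k0, hne0, hfg'⟩ := hker g' hg'X
          have hg'nX' : g' ∉ (rrState sW (i + 1)).1 a1 ∪
              ((rrState sW (i + 1)).2 \ (rrState sV (i + 1)).2) := by
            rw [hBsucc, hGWsucc]
            intro hmem
            rcases Finset.mem_union.mp hmem with h1 | h2
            · exact hMdisj g' h1 hg'M
            · exact (Finset.mem_erase.mp (Finset.mem_sdiff.mp h2).1).1 rfl
          refine ⟨Function.update f g (f g'), ?_, ?_⟩
          · intro x hx
            by_cases hxg : x = g
            · subst hxg
              refine ⟨k0, Nat.lt_succ_of_lt hk0i, hk00, ?_, hne0, ?_⟩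
              · exact rrState_snd_subset_le sV (Nat.le_of_lt hk0i) (hT ▸ hgT)
              · rw [Function.update_self]
                exact hfg'
            · obtain ⟨k, hki, hk0, hxk, hne, hfx⟩ := hker x (hold x hx hxg)
              exact ⟨k, Nat.lt_succ_of_lt hki, hk0, hxk, hne,
                by rw [Function.update_of_ne hxg]; exact hfx⟩
          · intro b
            refine le_trans (Finset.card_le_card_of_injOn
              (fun x => if x = g then g' else x) ?_ ?_) (hcard b)
            · intro x hx
              obtain ⟨hx1, hx2⟩ := Finset.mem_filter.mp hx
              by_cases hxg : x = g
              · subst hxg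
                simp only [if_pos rfl]
                rw [Function.update_self] at hx2
                exact Finset.mem_filter.mpr ⟨hg'X, hx2⟩
              · simp only [if_neg hxg]
                rw [Function.update_of_ne hxg] at hx2
                exact Finset.mem_filter.mpr ⟨hold x hx1 hxg, hx2⟩
            · intro x hx y hy hxy
              simp only at hxy
              by_cases hxg : x = g <;> by_cases hyg : y = g
              · rw [hxg, hyg]
              · rw [if_pos hxg, if_neg hyg] at hxy
                exact absurd ((Finset.mem_filter.mp hy).1) (hxy ▸ hg'nX')
              · rw [if_neg hxg, if_pos hyg] at hxy
                exact absurd ((Finset.mem_filter.mp hx).1) (hxy.symm ▸ hg'nX')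
              · rwa [if_neg hxg, if_neg hyg] at hxy
        · -- no new element enters
          have hXsub : ∀ x, x ∈ (rrState sW (i + 1)).1 a1 ∪
              ((rrState sW (i + 1)).2 \ (rrState sV (i + 1)).2) → x ∈ X := by
            intro x hx
            by_cases hxg : x = g
            · subst hxg
              rw [hBsucc, hGWsucc, hGVsucc] at hx
              rcases Finset.mem_union.mp hx with h1 | h2
              · exact Finset.mem_union_left _ h1
              · obtain ⟨hxM, _⟩ := Finset.mem_sdiff.mp h2
                exact absurd ⟨Finset.mem_of_mem_erase hxM, Finset.ne_of_mem_erase hxM⟩ hnew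
            · exact hold x hx hxg
          refine ⟨f, ?_, ?_⟩
          · intro x hx
            obtain ⟨k, hki, hk0, hxk, hne, hfx⟩ := hker x (hXsub x hx)
            exact ⟨k, Nat.lt_succ_of_lt hki, hk0, hxk, hne, hfx⟩
          · intro b
            refine le_trans (Finset.card_le_card ?_) (hcard b)
            intro x hx
            obtain ⟨hx1, hx2⟩ := Finset.mem_filter.mp hx
            exact Finset.mem_filter.mpr ⟨hXsub x hx1, hx2⟩


/-- In Round-Robin (Mechanism 1), comparing the truthful run with a run where agent 1
misreports `v₁'`: for every `i ≤ m`, letting `B_i` (resp. `B_i'`) be agent 1's bundle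
and `G_i` (resp. `G_i'`) the remaining goods after stage `i` of the truthful
(resp. manipulated) run, and `X_i = B_i' ∪ (G_i' \ G_i)`, there is a mapping
`M_i : X_i → B_i` with `v₁({g}) ≤ v₁({M_i(g)})` for all `g ∈ X_i` and
`|M_i⁻¹(b)| ≤ 2` for all `b ∈ B_i`. -/
theorem roundRobin1_mapping_exists {n m : ℕ} (hn : 0 < n)
    (v : Fin n → Finset (Fin m) → ℝ) (hv : ∀ j, IsValuation (v j))
    (v1' : Finset (Fin m) → ℝ) (hv1' : IsValuation v1') :
    ∀ i : ℕ, i ≤ m →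
      let a1 : Fin n := ⟨0, hn⟩
      let stT := rrState (fun j (_ : Finset (Fin m)) g => v j {g}) i
      let stM := rrState (fun j (_ : Finset (Fin m)) g =>
        Function.update v a1 v1' j {g}) i
      let Bi := stT.1 a1
      let Gi := stT.2
      let Bi' := stM.1 a1
      let Gi' := stM.2
      let Xi := Bi' ∪ (Gi' \ Gi)
      ∃ f : Fin m → Fin m,
        (∀ g ∈ Xi, f g ∈ Bi) ∧
        (∀ g ∈ Xi, v a1 {g} ≤ v a1 {f g}) ∧
        ∀ b ∈ Bi, (Xi.filter fun g => f g = b).card ≤ 2 := by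
  intro i him a1 stT stM Bi Gi Bi' Gi' Xi
  obtain ⟨f, hker, hcard⟩ := rr_map_invariant hn v v1' i him
  refine ⟨f, ?_, ?_, fun b _ => hcard b⟩
  · intro g hg
    obtain ⟨k, hki, hk0, hgk, hne, hfg⟩ := hker g hg
    rw [hfg]
    exact pick_mem_bundle hn v hk0 hki hne
  · intro g hg
    obtain ⟨k, hki, hk0, hgk, hne, hfg⟩ := hker g hg
    rw [hfg]
    exact chooseFavorite_le (fun h => v a1 {h}) _ hne g hgk
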